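/- Let φ: Σ⁺ → S be a semigroup morphism from the nonempty words over a finite alphabet Σ to a finite semigroup S such that φ(Σ) = {s} is a singleton. Let (k,ℓ) be the lexicographically least pair of positive integers with s^k = s^{k+ℓ}, and let n be the least positive integer such that s^n is idempotent. Then there exists a φ-weakly-good automaton with k+n states whose transition relation is deterministic and complete (for every state q and letter a there is exactly one q' with (q,a,q') ∈ Δ). -/

import Mathlib

/-- A (nondeterministic) Büchi/finite-word automaton with ordered states. -/
structure Auto (A : Type) where
  Q : Type
  fin : Fintype Q
  lin : LinearOrder Q
  trans : Q → A → Q → Prop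
  init : Q
  final : Set Q
  rep : Set Q

namespace Auto

variable {A : Type} (M : Auto A)

/-- The strict order on states. -/
def slt (p q : M.Q) : Prop := M.lin.lt p q

/-- `pathIn X p w q`: nonempty word `w` labels a run from `p` to `q`
with all intermediate states in `X`. -/
def pathIn (X : Set M.Q) : M.Q → List A → M.Q → Prop
  | _, [], _ => False
  | p, [a], q => M.trans p a q
  | p, a :: b :: w, q => ∃ r, r ∈ X ∧ M.trans p a r ∧ pathIn X r (b :: w) q

/-- `L_{p,X,q}`. -/
def Lset (X : Set M.Q) (p q : M.Q) : Set (List A) := {w | M.pathIn X p w q}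

/-- `↓q`. -/
def below (q : M.Q) : Set M.Q := {p | M.slt p q}

/-- `L_q = L_{q,↓q,q}`. -/
def Lq (q : M.Q) : Set (List A) := M.Lset (M.below q) q q

/-- Accepting run on a nonempty finite word: `ρ i` is the state after reading `i` letters. -/
def FinAccRun (w : List A) (ρ : Fin (w.length + 1) → M.Q) : Prop :=
  ρ 0 = M.init ∧
  (∀ i : Fin w.length, M.trans (ρ i.castSucc) (w.get i) (ρ i.succ)) ∧
  ρ (Fin.last w.length) ∈ M.final

/-- Accepting (Büchi) run on an infinite word. -/
def InfAccRun (w : ℕ → A) (ρ : ℕ → M.Q) : Prop :=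
  ρ 0 = M.init ∧ (∀ i, M.trans (ρ i) (w i) (ρ (i + 1))) ∧
  ∀ n, ∃ m, n ≤ m ∧ ρ m ∈ M.rep

/-- (G1): every finite or infinite word has exactly one accepting run. -/
def G1 : Prop :=
  (∀ w : List A, w ≠ [] → ∃! ρ : Fin (w.length + 1) → M.Q, M.FinAccRun w ρ) ∧
  (∀ w : ℕ → A, ∃! ρ : ℕ → M.Q, M.InfAccRun w ρ)

/-- (G2): each `L_q` is mapped by `φ` to a single idempotent of `S`. -/
def G2 {S : Type} [Semigroup S] (φ : List A → S) : Prop :=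
  ∀ q : M.Q, ∃ e : S, e * e = e ∧ ∀ w ∈ M.Lq q, φ w = e

/-- (G3): the initial state has no incoming transitions and is maximal. -/
def G3 : Prop :=
  (∀ p a, ¬ M.trans p a M.init) ∧ ∀ q : M.Q, q ≠ M.init → M.slt q M.init

/-- `φ`-weakly-good automaton. -/
def WeaklyGood {S : Type} [Semigroup S] (φ : List A → S) : Prop :=
  M.G1 ∧ M.G2 φ ∧ M.G3

/-- (G4) and `φ`-goodness. -/
def Good {S : Type} [Semigroup S] (φ : List A → S) : Prop :=
  M.WeaklyGood φ ∧
  ∃ f : M.Q, M.final = {f} ∧ (∀ a q, ¬ M.trans f a q) ∧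
    M.slt f M.init ∧ ∀ q : M.Q, q ≠ M.init → q ≠ f → M.slt q f

def Deterministic : Prop := ∀ p a q q', M.trans p a q → M.trans p a q' → q = q'

def Complete : Prop := ∀ p a, ∃ q, M.trans p a q

end Auto

/-- `spow s n = s^(n+1)`: powers in a semigroup (`spow s 0 = s`). -/
def spow {S : Type} [Semigroup S] (s : S) : ℕ → S
  | 0 => s
  | n + 1 => spow s n * s

namespace OneGen

/-- Transition function on `Fin (K+Nn+2)`: state `K+Nn+1` is the initial state,
states `0..K-1` form the tail, states `K..K+Nn` form a cycle of length `Nn+1`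
with top `K+Nn`. -/
def dlt (K Nn : ℕ) (p : Fin (K + Nn + 2)) : Fin (K + Nn + 2) :=
  if p.val = K + Nn then ⟨K, by omega⟩
  else ⟨(p.val + 1) % (K + Nn + 2), Nat.mod_lt _ (by omega)⟩

lemma dlt_val (K Nn : ℕ) (p : Fin (K + Nn + 2)) :
    (dlt K Nn p).val =
      if p.val = K + Nn then K
      else if p.val = K + Nn + 1 then 0 else p.val + 1 := by
  have hp := p.isLt
  unfold dlt
  split
  · rfl
  · rename_i h
    by_cases h2 : p.val = K + Nn + 1
    · rw [if_pos h2]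
      show (p.val + 1) % (K + Nn + 2) = 0
      rw [show p.val + 1 = K + Nn + 2 from by omega, Nat.mod_self]
    · rw [if_neg h2]
      show (p.val + 1) % (K + Nn + 2) = p.val + 1
      exact Nat.mod_eq_of_lt (by omega)

lemma dlt_ne_init (K Nn : ℕ) (p : Fin (K + Nn + 2)) :
    (dlt K Nn p).val ≠ K + Nn + 1 := by
  rw [dlt_val]
  split <;> first | omega | (split <;> omega)

lemma iter_ne_init (K Nn : ℕ) (p : Fin (K + Nn + 2)) (m : ℕ) (hm : 1 ≤ m) :
    ((dlt K Nn)^[m] p).val ≠ K + Nn + 1 := by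
  obtain ⟨m', rfl⟩ : ∃ m', m = m' + 1 := ⟨m - 1, by omega⟩
  rw [Function.iterate_succ_apply']
  exact dlt_ne_init K Nn _

lemma iter_incr (K Nn : ℕ) (p : Fin (K + Nn + 2)) :
    ∀ i : ℕ, p.val + i ≤ K + Nn → ((dlt K Nn)^[i] p).val = p.val + i := by
  intro i
  induction i with
  | zero => simp
  | succ i ih =>
    intro h
    have h1 := ih (by omega)
    rw [Function.iterate_succ_apply', dlt_val, h1]
    split <;> first | omega | (split <;> omega)

lemma iter_ge (K Nn : ℕ) (p : Fin (K + Nn + 2)) (hp : p.val ≠ K + Nn + 1) :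
    ∀ m : ℕ, 1 ≤ m →
      K ≤ ((dlt K Nn)^[m] p).val ∨ ((dlt K Nn)^[m] p).val = p.val + m := by
  intro m
  induction m with
  | zero => omega
  | succ m ih =>
    intro _
    rw [Function.iterate_succ_apply', dlt_val]
    rcases Nat.eq_zero_or_pos m with rfl | hm
    · simp only [Function.iterate_zero, id_eq]
      by_cases h1 : p.val = K + Nn <;> by_cases h2 : p.val = K + Nn + 1 <;> simp [h1, h2] <;> omega
    · have h2 := ih hm
      have h3 := iter_ne_init K Nn p m hm
      split <;> first | omega | (split <;> omega)

lemma loop_tail (K Nn : ℕ) (p : Fin (K + Nn + 2)) (hp : p.val < K)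
    (m : ℕ) (hm : 1 ≤ m) (hloop : p = (dlt K Nn)^[m] p) : False := by
  have h := iter_ge K Nn p (by omega) m hm
  have hv := congrArg Fin.val hloop
  omega

lemma loop_cyc (K Nn : ℕ) (p : Fin (K + Nn + 2)) (hp1 : K ≤ p.val)
    (hp2 : p.val < K + Nn) (m : ℕ) (hm : 1 ≤ m)
    (hloop : p = (dlt K Nn)^[m] p) :
    ∃ i, 1 ≤ i ∧ i < m ∧ ((dlt K Nn)^[i] p).val = K + Nn := by
  have hi0 : ((dlt K Nn)^[K + Nn - p.val] p).val = K + Nn := by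
    rw [iter_incr K Nn p (K + Nn - p.val) (by omega)]; omega
  have hlt : K + Nn - p.val < m := by
    by_contra hcon
    have h2 := iter_incr K Nn p m (by omega)
    have hv := congrArg Fin.val hloop
    omega
  exact ⟨K + Nn - p.val, by omega, hlt, hi0⟩

lemma loop_top (K Nn : ℕ) (p : Fin (K + Nn + 2)) (hp : p.val = K + Nn)
    (m : ℕ) (hm : 1 ≤ m) (hloop : p = (dlt K Nn)^[m] p)
    (hmid : ∀ i, 1 ≤ i → i < m → ((dlt K Nn)^[i] p).val < K + Nn) :
    m = Nn + 1 := by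
  have hd : (dlt K Nn p).val = K := by rw [dlt_val, if_pos hp]
  have hstep : ∀ i, 1 ≤ i → i ≤ Nn + 1 → ((dlt K Nn)^[i] p).val = K + (i - 1) := by
    intro i h1 h2
    obtain ⟨j, rfl⟩ : ∃ j, i = j + 1 := ⟨i - 1, by omega⟩
    rw [Function.iterate_succ_apply]
    rw [iter_incr K Nn (dlt K Nn p) j (by omega)]
    omega
  by_contra hne
  rcases Nat.lt_or_ge m (Nn + 2) with h | h
  · have h4 := hstep m hm (by omega)
    have hv := congrArg Fin.val hloop
    omega
  · have h4 := hmid (Nn + 1) (by omega) (by omega)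
    have h5 := hstep (Nn + 1) (by omega) (le_refl _)
    omega

/-- The lasso automaton. -/
def Mk (A : Type) (K Nn : ℕ) : Auto A where
  Q := Fin (K + Nn + 2)
  fin := inferInstance
  lin := inferInstance
  trans := fun p _ q => q = dlt K Nn p
  init := ⟨K + Nn + 1, by omega⟩
  final := Set.univ
  rep := Set.univ

lemma slt_iff {A : Type} (K Nn : ℕ) (p q : Fin (K + Nn + 2)) :
    (Mk A K Nn).slt p q ↔ p.val < q.val := Iff.rfl

lemma pathIn_spec {A : Type} (K Nn : ℕ) (X : Set (Fin (K + Nn + 2))) :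
    ∀ (w : List A) (p q : Fin (K + Nn + 2)), (Mk A K Nn).pathIn X p w q →
      q = (dlt K Nn)^[w.length] p ∧
      ∀ i, 1 ≤ i → i < w.length → (dlt K Nn)^[i] p ∈ X := by
  intro w
  induction w with
  | nil => intro p q h; exact h.elim
  | cons a w ih =>
    intro p q h
    cases w with
    | nil =>
      have h' : q = dlt K Nn p := h
      refine ⟨h', ?_⟩
      intro i h1 h2
      simp only [List.length_cons, List.length_nil] at h2
      omega
    | cons b w' =>
      obtain ⟨r, hrX, hr, hpath⟩ := (h : ∃ r, r ∈ X ∧ (Mk A K Nn).trans p a r ∧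
        (Mk A K Nn).pathIn X r (b :: w') q)
      have hr' : r = dlt K Nn p := hr
      obtain ⟨hq, hmid⟩ := ih r q hpath
      constructor
      · rw [hq, hr']
        simp only [List.length_cons]
        exact (Function.iterate_succ_apply (dlt K Nn) (w'.length + 1) p).symm
      · intro i h1 h2
        rcases Nat.lt_or_ge i 2 with h3 | h3
        · have hi1 : i = 1 := by omega
          subst hi1
          show dlt K Nn p ∈ X
          rw [← hr']; exact hrX
        · obtain ⟨j, rfl⟩ : ∃ j, i = j + 1 := ⟨i - 1, by omega⟩
          rw [Function.iterate_succ_apply, ← hr']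
          refine hmid j (by omega) ?_
          simp only [List.length_cons] at h2 ⊢
          omega

lemma spow_comm {S : Type} [Semigroup S] (s : S) : ∀ m, s * spow s m = spow s m * s
  | 0 => rfl
  | m + 1 => by
      show s * (spow s m * s) = (spow s m * s) * s
      rw [← mul_assoc, spow_comm s m]

lemma phi_spow {A S : Type} [Semigroup S] (φ : List A → S)
    (hφ : ∀ u v : List A, u ≠ [] → v ≠ [] → φ (u ++ v) = φ u * φ v)
    (s : S) (hs : ∀ a : A, φ [a] = s) :
    ∀ (m : ℕ) (w : List A), w.length = m + 1 → φ w = spow s m := by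
  intro m
  induction m with
  | zero =>
    intro w hw
    obtain ⟨a, rfl⟩ : ∃ a, w = [a] := by
      cases w with
      | nil => simp at hw
      | cons a t =>
        cases t with
        | nil => exact ⟨a, rfl⟩
        | cons c t' => simp at hw
    exact hs a
  | succ m ih =>
    intro w hw
    cases w with
    | nil => simp at hw
    | cons a t =>
      have ht : t.length = m + 1 := by simpa using hw
      have hsplit : φ (a :: t) = φ [a] * φ t := by
        have := hφ [a] t (by simp) (by intro h; rw [h] at ht; simp at ht)
        simpa using this
      rw [hsplit, hs a, ih t ht]
      exact spow_comm s m

end OneGen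

/-- **One-generator base case.** If all letters are mapped to the same element
`s`, with `(k, ℓ)` the lexicographically least pair of positive integers such
that `s^k = s^{k+ℓ}` and `n` the least positive integer with `s^n` idempotent,
then there is a deterministic and complete `φ`-weakly-good automaton with
`k + n` states. -/
theorem one_generator_weaklyGood {A S : Type} [Fintype A] [Nonempty A]
    [Semigroup S] [Fintype S]
    (φ : List A → S)
    (hφ : ∀ u v : List A, u ≠ [] → v ≠ [] → φ (u ++ v) = φ u * φ v)
    (s : S) (hs : ∀ a : A, φ [a] = s)
    (k ℓ : ℕ) (hk : 0 < k) (hℓ : 0 < ℓ)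
    (hkl : spow s (k - 1) = spow s (k + ℓ - 1))
    (hklmin : ∀ k' ℓ' : ℕ, 0 < k' → 0 < ℓ' →
      spow s (k' - 1) = spow s (k' + ℓ' - 1) →
      k < k' ∨ (k = k' ∧ ℓ ≤ ℓ'))
    (n : ℕ) (hn : 0 < n)
    (hidem : spow s (n - 1) * spow s (n - 1) = spow s (n - 1))
    (hnmin : ∀ m : ℕ, 0 < m →
      spow s (m - 1) * spow s (m - 1) = spow s (m - 1) → n ≤ m) :
    ∃ M : Auto A, M.WeaklyGood φ ∧ M.Deterministic ∧ M.Complete ∧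
      @Fintype.card M.Q M.fin = k + n := by
  obtain ⟨K, rfl⟩ : ∃ K, k = K + 1 := ⟨k - 1, by omega⟩
  obtain ⟨Nn, rfl⟩ : ∃ Nn, n = Nn + 1 := ⟨n - 1, by omega⟩
  simp only [Nat.add_sub_cancel] at hidem
  refine ⟨OneGen.Mk A K Nn, ⟨⟨?_, ?_⟩, ?_, ?_, ?_⟩, ?_, ?_, ?_⟩
  · -- G1, finite words
    intro w hw
    refine ⟨fun i => (OneGen.dlt K Nn)^[i.val] (OneGen.Mk A K Nn).init,
      ⟨?_, ?_, Set.mem_univ _⟩, ?_⟩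
    · show (OneGen.dlt K Nn)^[(0 : Fin (w.length + 1)).val] (OneGen.Mk A K Nn).init
        = (OneGen.Mk A K Nn).init
      simp
      rfl
    · intro i
      show (OneGen.dlt K Nn)^[i.succ.val] (OneGen.Mk A K Nn).init
          = OneGen.dlt K Nn ((OneGen.dlt K Nn)^[i.castSucc.val] (OneGen.Mk A K Nn).init)
      rw [Fin.val_succ, Fin.coe_castSucc]
      exact Function.iterate_succ_apply' _ _ _
    · intro ρ hρ
      obtain ⟨h0, hstep, -⟩ := hρ
      have key : ∀ (m : ℕ) (h : m < w.length + 1),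
          ρ ⟨m, h⟩ = (OneGen.dlt K Nn)^[m] (OneGen.Mk A K Nn).init := by
        intro m
        induction m with
        | zero =>
          intro h
          rw [Fin.mk_zero]
          exact h0
        | succ m ih =>
          intro h
          have hm : m < w.length := by omega
          have hst : ρ (⟨m, hm⟩ : Fin w.length).succ
              = OneGen.dlt K Nn (ρ (⟨m, hm⟩ : Fin w.length).castSucc) := hstep ⟨m, hm⟩
          have hc : (⟨m, hm⟩ : Fin w.length).castSucc = ⟨m, by omega⟩ := rfl
          have hsu : (⟨m, hm⟩ : Fin w.length).succ = ⟨m + 1, h⟩ := rfl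
          rw [hc, hsu] at hst
          rw [hst, ih (by omega)]
          exact (Function.iterate_succ_apply' _ _ _).symm
      funext i
      have hk2 := key i.val i.isLt
      simpa using hk2
  · -- G1, infinite words
    intro w
    refine ⟨fun m => (OneGen.dlt K Nn)^[m] (OneGen.Mk A K Nn).init,
      ⟨rfl, fun i => ?_, fun n0 => ⟨n0, le_refl _, Set.mem_univ _⟩⟩, ?_⟩
    · exact Function.iterate_succ_apply' (OneGen.dlt K Nn) i _
    · intro ρ hρ
      obtain ⟨h0, hstep, -⟩ := hρ
      funext m
      induction m with
      | zero => exact h0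
      | succ m ih =>
        have hst : ρ (m + 1) = OneGen.dlt K Nn (ρ m) := hstep m
        rw [hst, ih]
        exact (Function.iterate_succ_apply' (OneGen.dlt K Nn) m _).symm
  · -- G2
    intro q
    refine ⟨spow s Nn, hidem, ?_⟩
    intro w hw
    have hw' : (OneGen.Mk A K Nn).pathIn ((OneGen.Mk A K Nn).below q) q w q := hw
    have hlen : 1 ≤ w.length := by
      cases w with
      | nil => exact hw'.elim
      | cons a t => simp
    obtain ⟨hq, hmid⟩ := OneGen.pathIn_spec K Nn _ w q q hw'
    have hmid' : ∀ i, 1 ≤ i → i < w.length →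
        ((OneGen.dlt K Nn)^[i] q).val < q.val := by
      intro i h1 h2
      have hb : (OneGen.Mk A K Nn).slt ((OneGen.dlt K Nn)^[i] q) q := hmid i h1 h2
      exact (OneGen.slt_iff K Nn _ _).mp hb
    have hqlt := q.isLt
    have hqv := congrArg Fin.val hq
    by_cases hc1 : q.val = K + Nn + 1
    · exact (OneGen.iter_ne_init K Nn q w.length hlen (by omega)).elim
    by_cases hc2 : q.val < K
    · exact (OneGen.loop_tail K Nn q hc2 w.length hlen hq).elim
    by_cases hc3 : q.val < K + Nn
    · exfalso
      obtain ⟨i, hi1, hi2, hi3⟩ :=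
        OneGen.loop_cyc K Nn q (by omega) hc3 w.length hlen hq
      have := hmid' i hi1 hi2
      omega
    · have hq4 : q.val = K + Nn := by omega
      have hmid2 : ∀ i, 1 ≤ i → i < w.length →
          ((OneGen.dlt K Nn)^[i] q).val < K + Nn := by
        intro i h1 h2
        have h3 := hmid' i h1 h2
        omega
      have hlen' : w.length = Nn + 1 :=
        OneGen.loop_top K Nn q hq4 w.length hlen hq hmid2
      exact OneGen.phi_spow φ hφ s hs Nn w hlen'
  · -- G3, no incoming
    intro p a h
    have h' : (OneGen.Mk A K Nn).init = OneGen.dlt K Nn p := h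
    have hv : K + Nn + 1 = (OneGen.dlt K Nn p).val := congrArg Fin.val h'
    exact OneGen.dlt_ne_init K Nn p hv.symm
  · -- G3, maximality
    intro q hq
    have hv : q.val ≠ K + Nn + 1 := fun h => hq (Fin.ext h)
    have hqlt := q.isLt
    exact (OneGen.slt_iff K Nn _ _).mpr (show q.val < K + Nn + 1 by omega)
  · -- deterministic
    intro p a q q' h h'
    exact (h : q = OneGen.dlt K Nn p).trans (h' : q' = OneGen.dlt K Nn p).symm
  · -- complete
    intro p a
    exact ⟨OneGen.dlt K Nn p, rfl⟩
  · -- cardinality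
    have hcard : Fintype.card (Fin (K + Nn + 2)) = K + Nn + 2 := Fintype.card_fin _
    exact hcard.trans (by omega)
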